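/- The determinant of the n×n Hilbert matrix H_n with entries H_{ij} = 1/(i+j−1), indexed by 1 ≤ i,j ≤ n, equals c_n^4 / c_{2n}, where c_n = ∏_{i=1}^{n−1} i!. -/

import Mathlib

open Finset Nat

lemma HD_pascal_step (i : ℕ) (f : ℕ → ℚ) :
    ∑ k ∈ range (i+2), (-1:ℚ)^k * ((i+1).choose k) * f k
      = ∑ k ∈ range (i+1), (-1:ℚ)^k * (i.choose k) * f k
        - ∑ k ∈ range (i+1), (-1:ℚ)^k * (i.choose k) * f (k+1) := by
  rw [Finset.sum_range_succ' (fun k => (-1:ℚ)^k * ((i+1).choose k) * f k)]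
  have h1 : ∀ k ∈ range (i+1), (-1:ℚ)^(k+1) * ((i+1).choose (k+1)) * f (k+1)
      = (-1:ℚ)^(k+1) * (i.choose k) * f (k+1) + (-1:ℚ)^(k+1) * (i.choose (k+1)) * f (k+1) := by
    intro k _
    rw [Nat.choose_succ_succ]
    push_cast
    ring
  rw [Finset.sum_congr rfl h1, Finset.sum_add_distrib]
  have h2 : ∑ k ∈ range (i+1), (-1:ℚ)^(k+1) * (i.choose (k+1)) * f (k+1)
      = ∑ k ∈ range (i+2), (-1:ℚ)^k * (i.choose k) * f k - (-1:ℚ)^0 * (i.choose 0) * f 0 := by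
    rw [Finset.sum_range_succ' (fun k => (-1:ℚ)^k * (i.choose k) * f k)]
    ring
  rw [h2, Finset.sum_range_succ (fun k => (-1:ℚ)^k * (i.choose k) * f k)]
  simp only [Nat.choose_succ_self, Nat.cast_zero, mul_zero, zero_mul, add_zero, pow_zero,
    Nat.choose_zero_right, Nat.cast_one, one_mul, mul_one]
  have h3 : ∑ x ∈ range (i+1), (-1:ℚ)^(x+1) * (i.choose x) * f (x+1)
      = -∑ x ∈ range (i+1), (-1:ℚ)^x * (i.choose x) * f (x+1) := by
    rw [← Finset.sum_neg_distrib]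
    exact Finset.sum_congr rfl fun x _ => by ring
  rw [h3]
  ring

lemma HD_beta_sum (i : ℕ) : ∀ j : ℕ,
    ∑ k ∈ range (i+1), (-1:ℚ)^k * (i.choose k) * (1 / (j+k+1))
      = (i ! : ℚ) * (j ! : ℚ) / ((i+j+1)! : ℚ) := by
  induction i with
  | zero =>
    intro j
    have h : ((j:ℚ)+1) ≠ 0 := by positivity
    have h2 : ((j ! : ℕ):ℚ) ≠ 0 := by exact_mod_cast j.factorial_ne_zero
    simp only [zero_add, Nat.add_comm 0 j, range_one, sum_singleton, pow_zero,
      Nat.choose_zero_right, Nat.cast_one, Nat.cast_zero, one_mul, add_zero, zero_add]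
    rw [Nat.factorial_succ]
    push_cast
    field_simp
    simp
  | succ i ih =>
    intro j
    rw [HD_pascal_step i (fun k => 1 / ((j:ℚ)+k+1))]
    have e1 : ∑ k ∈ range (i+1), (-1:ℚ)^k * (i.choose k) * (1/((j:ℚ)+(k+1:ℕ)+1))
        = (i ! : ℚ) * ((j+1) ! : ℚ) / ((i+(j+1)+1)! : ℚ) := by
      rw [← ih (j+1)]
      apply Finset.sum_congr rfl
      intro k _
      push_cast
      ring_nf
    rw [e1, ih j]
    have hnat1 : i+(j+1)+1 = (i+j+1)+1 := by ring
    have hnat2 : i+1+j+1 = (i+j+1)+1 := by ring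
    rw [hnat1, hnat2, Nat.factorial_succ (i+j+1), Nat.factorial_succ i, Nat.factorial_succ j]
    have h1 : (((i+j+1)! : ℕ):ℚ) ≠ 0 := by exact_mod_cast (i+j+1).factorial_ne_zero
    have h2 : ((i:ℚ)+j+1) ≠ 0 := by positivity
    have h3 : ((i:ℚ)+j+1+1) ≠ 0 := by positivity
    push_cast
    field_simp
    ring

lemma HD_diff_choose (i : ℕ) : ∀ r j : ℕ,
    ∑ m ∈ range (i+1), (-1:ℚ)^m * (i.choose m) * ((r+m).choose j)
      = (-1:ℚ)^i * (if i ≤ j then (r.choose (j-i) : ℚ) else 0) := by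
  induction i with
  | zero => intro r j; simp
  | succ i ih =>
    intro r j
    rw [HD_pascal_step i (fun m => (((r+m).choose j : ℕ) : ℚ))]
    have e1 : ∑ m ∈ range (i+1), (-1:ℚ)^m * (i.choose m) * (((r+(m+1)).choose j : ℕ) : ℚ)
        = ∑ m ∈ range (i+1), (-1:ℚ)^m * (i.choose m) * ((((r+1)+m).choose j : ℕ) : ℚ) := by
      apply Finset.sum_congr rfl
      intro m _
      rw [show r + (m+1) = (r+1)+m by ring]
    rw [e1, ih r j, ih (r+1) j]
    by_cases h : i + 1 ≤ j
    · have h' : i ≤ j := Nat.le_of_succ_le h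
      rw [if_pos h, if_pos h', if_pos h']
      have hsub : j - i = (j - (i+1)) + 1 := by omega
      rw [hsub, Nat.choose_succ_succ (r) (j - (i+1))]
      push_cast
      ring
    · rw [if_neg h]
      by_cases h' : i ≤ j
      · have hij : i = j := by omega
        rw [if_pos h', if_pos h']
        subst hij
        simp [Nat.sub_self]
      · rw [if_neg h', if_neg h']
        ring

lemma HD_vand (i k : ℕ) (hk : k ≤ i) :
    ((i+k).choose k : ℕ) = ∑ m ∈ range (i+1), (i.choose m) * (k.choose m) := by
  rw [Nat.add_choose_eq i k k, Finset.Nat.sum_antidiagonal_eq_sum_range_succ_mk]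
  dsimp only
  have e : ∀ m ∈ range (k+1), i.choose m * k.choose (k-m) = i.choose m * k.choose m := by
    intro m hm
    rw [Nat.choose_symm (Nat.lt_succ_iff.mp (Finset.mem_range.mp hm))]
  rw [Finset.sum_congr rfl e]
  exact Finset.sum_subset (Finset.range_subset_range.mpr (by omega)) (by
    intro m _ hm
    have hkm : k < m := by
      simp only [Finset.mem_range] at hm; omega
    rw [Nat.choose_eq_zero_of_lt hkm, Nat.mul_zero])

lemma HD_legendre_sum (i j : ℕ) :
    ∑ k ∈ range (i+1), (-1:ℚ)^k * (i.choose k) * ((i+k).choose k) * (1/(j+k+1))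
      = (-1:ℚ)^i * ((i ! : ℚ) * (j ! : ℚ) * (if i ≤ j then (j.choose i : ℚ) else 0)) / ((i+j+1)! : ℚ) := by
  have hfac : ∀ a : ℕ, ((a ! : ℕ) : ℚ) ≠ 0 := fun a => by exact_mod_cast a.factorial_ne_zero
  have step1 : ∀ k ∈ range (i+1),
      (-1:ℚ)^k * (i.choose k) * ((i+k).choose k) * (1/(j+k+1))
        = ∑ m ∈ range (i+1), (-1:ℚ)^k * (i.choose k) * ((i.choose m : ℚ) * (k.choose m)) * (1/(j+k+1)) := by
    intro k hk
    rw [HD_vand i k (Nat.lt_succ_iff.mp (Finset.mem_range.mp hk))]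
    push_cast
    rw [Finset.mul_sum, Finset.sum_mul]
  rw [Finset.sum_congr rfl step1, Finset.sum_comm]
  have step2 : ∀ m ∈ range (i+1),
      ∑ k ∈ range (i+1), (-1:ℚ)^k * (i.choose k) * ((i.choose m : ℚ) * (k.choose m)) * (1/(j+k+1))
        = ((-1:ℚ)^m * (i.choose m : ℚ) * (((j+m).choose j : ℕ) : ℚ))
            * ((i ! : ℚ) * (j ! : ℚ) / ((i+j+1)! : ℚ)) := by
    intro m hm
    have hmi : m ≤ i := Nat.lt_succ_iff.mp (Finset.mem_range.mp hm)
    have hA : ∑ k ∈ range (i+1), (-1:ℚ)^k * (i.choose k) * ((i.choose m : ℚ) * (k.choose m)) * (1/(j+k+1))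
        = ∑ k ∈ Ico m (i+1), (-1:ℚ)^k * (i.choose k) * ((i.choose m : ℚ) * (k.choose m)) * (1/(j+k+1)) := by
      rw [Finset.range_eq_Ico]
      refine (Finset.sum_subset (Finset.Ico_subset_Ico (Nat.zero_le m) le_rfl) ?_).symm
      intro k hk1 hk2
      have : k < m := by
        simp only [Finset.mem_Ico, Finset.mem_range] at hk1 hk2
        omega
      rw [Nat.choose_eq_zero_of_lt this]
      push_cast
      ring
    rw [hA, Finset.sum_Ico_eq_sum_range, show i + 1 - m = (i-m)+1 by omega]
    have hB : ∀ t ∈ range ((i-m)+1),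
        (-1:ℚ)^(m+t) * (i.choose (m+t)) * ((i.choose m : ℚ) * ((m+t).choose m)) * (1/((j:ℚ)+((m+t : ℕ):ℚ)+1))
          = ((-1:ℚ)^m * (i.choose m : ℚ)^2)
              * ((-1:ℚ)^t * ((i-m).choose t) * (1/(((j+m : ℕ) : ℚ)+t+1))) := by
      intro t ht
      have htm : m + t ≤ i := by
        simp only [Finset.mem_range] at ht
        omega
      have hc : ((i.choose (m+t) : ℕ) : ℚ) * (((m+t).choose m : ℕ) : ℚ)
          = ((i.choose m : ℕ) : ℚ) * (((i-m).choose t : ℕ) : ℚ) := by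
        have := Nat.choose_mul (n := i) (Nat.le_add_right m t)
        rw [Nat.add_sub_cancel_left] at this
        exact_mod_cast congrArg (Nat.cast : ℕ → ℚ) this
      push_cast
      push_cast at hc
      rw [pow_add]
      linear_combination ((-1:ℚ)^m * (-1:ℚ)^t * ((i.choose m : ℕ):ℚ) * (1/((j:ℚ)+m+t+1))) * hc
    rw [Finset.sum_congr rfl hB, ← Finset.mul_sum, HD_beta_sum (i-m) (j+m),
      show (i-m) + (j+m) + 1 = i+j+1 by omega]
    have hc1 : ((i.choose m : ℕ) : ℚ) = (i ! : ℚ) / ((m ! : ℚ) * (((i-m) ! : ℕ) : ℚ)) :=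
      Nat.cast_choose ℚ hmi
    have hc2 : (((j+m).choose j : ℕ) : ℚ) = (((j+m)! : ℕ) : ℚ) / ((j ! : ℚ) * ((m ! : ℕ) : ℚ)) := by
      rw [Nat.cast_choose ℚ (Nat.le_add_right j m), Nat.add_sub_cancel_left]
    rw [hc1, hc2]
    field_simp
  rw [Finset.sum_congr rfl step2, ← Finset.sum_mul, HD_diff_choose i j j]
  by_cases h : i ≤ j
  · rw [if_pos h, if_pos h, Nat.choose_symm h]
    ring
  · rw [if_neg h, if_neg h]
    ring

lemma HD_prod_fac_two_mul (n : ℕ) :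
    (∏ i ∈ range (2*n), i !) = ∏ i ∈ range n, ((2*i)! * (2*i+1)!) := by
  induction n with
  | zero => rfl
  | succ n ih =>
    rw [Finset.prod_range_succ, ← ih, show 2*(n+1) = (2*n)+1+1 by ring,
      Finset.prod_range_succ, Finset.prod_range_succ]
    ring

theorem hilbert_det (n : ℕ) :
    (Matrix.of fun i j : Fin n => (1 : ℚ) / ((i : ℕ) + (j : ℕ) + 1)).det =
      ((∏ i ∈ Finset.range n, Nat.factorial i : ℕ) : ℚ) ^ 4 /
        ((∏ i ∈ Finset.range (2 * n), Nat.factorial i : ℕ) : ℚ) := by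
  classical
  set H : Matrix (Fin n) (Fin n) ℚ :=
    Matrix.of fun i j : Fin n => (1 : ℚ) / ((i : ℕ) + (j : ℕ) + 1) with hH
  set A : Matrix (Fin n) (Fin n) ℚ :=
    Matrix.of (fun i k : Fin n =>
      (-1:ℚ)^((i:ℕ)+(k:ℕ)) * (((i:ℕ).choose k : ℕ) : ℚ) * ((((i:ℕ)+(k:ℕ)).choose k : ℕ) : ℚ)) with hA
  have hAH : ∀ i j : Fin n, (A * H) i j
      = if (i:ℕ) ≤ (j:ℕ) then
          (((i:ℕ)! : ℕ) : ℚ) * (((j:ℕ)! : ℕ) : ℚ) * (((j:ℕ).choose i : ℕ):ℚ)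
            / ((((i:ℕ)+(j:ℕ)+1)! : ℕ) : ℚ)
        else 0 := by
    intro i j
    have h1 : (A * H) i j = ∑ k ∈ range n,
        (-1:ℚ)^((i:ℕ)+k) * (((i:ℕ).choose k : ℕ) : ℚ) * ((((i:ℕ)+k).choose k : ℕ) : ℚ)
          * (1/((k:ℚ)+(j:ℕ)+1)) := by
      rw [Matrix.mul_apply]
      rw [← Fin.sum_univ_eq_sum_range (fun k =>
        (-1:ℚ)^((i:ℕ)+k) * (((i:ℕ).choose k : ℕ) : ℚ) * ((((i:ℕ)+k).choose k : ℕ) : ℚ)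
          * (1/((k:ℚ)+(j:ℕ)+1))) n]
      apply Finset.sum_congr rfl
      intro k _
      simp only [hA, hH, Matrix.of_apply]
    have h2 : ∑ k ∈ range n,
        (-1:ℚ)^((i:ℕ)+k) * (((i:ℕ).choose k : ℕ) : ℚ) * ((((i:ℕ)+k).choose k : ℕ) : ℚ)
          * (1/((k:ℚ)+(j:ℕ)+1))
        = ∑ k ∈ range ((i:ℕ)+1),
        (-1:ℚ)^((i:ℕ)+k) * (((i:ℕ).choose k : ℕ) : ℚ) * ((((i:ℕ)+k).choose k : ℕ) : ℚ)
          * (1/((k:ℚ)+(j:ℕ)+1)) := by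
      refine (Finset.sum_subset (Finset.range_subset_range.mpr i.isLt) ?_).symm
      intro k hk1 hk2
      have : (i:ℕ) < k := by
        simp only [Finset.mem_range] at hk1 hk2; omega
      rw [Nat.choose_eq_zero_of_lt this]
      push_cast
      ring
    have h3 : ∑ k ∈ range ((i:ℕ)+1),
        (-1:ℚ)^((i:ℕ)+k) * (((i:ℕ).choose k : ℕ) : ℚ) * ((((i:ℕ)+k).choose k : ℕ) : ℚ)
          * (1/((k:ℚ)+(j:ℕ)+1))
        = (-1:ℚ)^(i:ℕ) * ∑ k ∈ range ((i:ℕ)+1),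
        (-1:ℚ)^k * (((i:ℕ).choose k : ℕ) : ℚ) * ((((i:ℕ)+k).choose k : ℕ) : ℚ)
          * (1/(((j:ℕ):ℚ)+k+1)) := by
      rw [Finset.mul_sum]
      apply Finset.sum_congr rfl
      intro k _
      rw [pow_add]
      ring
    rw [h1, h2, h3, HD_legendre_sum (i:ℕ) (j:ℕ)]
    have hone : (-1:ℚ)^(i:ℕ) * (-1:ℚ)^(i:ℕ) = 1 := by
      rw [← pow_add]
      exact Even.neg_one_pow ⟨(i:ℕ), rfl⟩
    split_ifs with h
    · field_simp
      linear_combination ((((j:ℕ).choose i : ℕ):ℚ)) * hone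
    · simp
  have hup : (A * H).BlockTriangular id := by
    intro p q hpq
    rw [hAH p q, if_neg]
    exact Nat.not_le.mpr (by exact_mod_cast hpq)
  have hdet1 : (A * H).det = ∏ p : Fin n, (A * H) p p := Matrix.det_of_upperTriangular hup
  have hlow : A.BlockTriangular OrderDual.toDual := by
    intro p q hpq
    have hlt : (p:ℕ) < (q:ℕ) := by exact_mod_cast OrderDual.toDual_lt_toDual.mp hpq
    simp only [hA, Matrix.of_apply]
    rw [Nat.choose_eq_zero_of_lt hlt]
    push_cast
    ring
  have hdetA : A.det = ∏ p : Fin n, A p p := Matrix.det_of_lowerTriangular A hlow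
  have hApp : ∀ p : Fin n, A p p = ((((p:ℕ)+(p:ℕ)).choose p : ℕ) : ℚ) := by
    intro p
    simp only [hA, Matrix.of_apply]
    rw [Even.neg_one_pow ⟨(p:ℕ), rfl⟩, Nat.choose_self]
    push_cast
    ring
  have hdiagval : ∀ p : Fin n, (A * H) p p
      = ((((p:ℕ)!) : ℕ) : ℚ) * ((((p:ℕ)!) : ℕ) : ℚ) / (((((p:ℕ)+(p:ℕ)+1)!) : ℕ) : ℚ) := by
    intro p
    rw [hAH p p, if_pos le_rfl, Nat.choose_self]
    push_cast
    ring
  have hprodA : A.det = ∏ p ∈ range n, (((p+p).choose p : ℕ) : ℚ) := by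
    rw [hdetA, ← Fin.prod_univ_eq_prod_range (fun p => (((p+p).choose p : ℕ) : ℚ)) n]
    exact Finset.prod_congr rfl fun p _ => hApp p
  have hprodD : ∏ p : Fin n, (A * H) p p
      = ∏ p ∈ range n, (((p !) : ℕ) : ℚ) * (((p !) : ℕ) : ℚ) / ((((p+p+1)!) : ℕ) : ℚ) := by
    rw [← Fin.prod_univ_eq_prod_range (fun p => (((p !) : ℕ) : ℚ) * (((p !) : ℕ) : ℚ) / ((((p+p+1)!) : ℕ) : ℚ)) n]
    exact Finset.prod_congr rfl fun p _ => hdiagval p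
  have hAne : A.det ≠ 0 := by
    rw [hprodA]
    apply Finset.prod_ne_zero_iff.mpr
    intro p _
    have : 0 < (p+p).choose p := Nat.choose_pos (Nat.le_add_right p p)
    positivity
  have hHdet : H.det = (∏ p ∈ range n, (((p !) : ℕ) : ℚ) * (((p !) : ℕ) : ℚ) / ((((p+p+1)!) : ℕ) : ℚ))
      / (∏ p ∈ range n, (((p+p).choose p : ℕ) : ℚ)) := by
    rw [← hprodA, ← hprodD, eq_div_iff hAne, mul_comm, ← Matrix.det_mul]
    exact hdet1
  rw [hHdet, HD_prod_fac_two_mul n]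
  rw [← Finset.prod_div_distrib]
  rw [Nat.cast_prod, Nat.cast_prod, ← Finset.prod_pow, ← Finset.prod_div_distrib]
  apply Finset.prod_congr rfl
  intro p _
  have h1 : (((p+p).choose p : ℕ) : ℚ) = ((((p+p)!) : ℕ) : ℚ) / ((((p !):ℕ):ℚ) * (((p !):ℕ):ℚ)) := by
    rw [Nat.cast_choose ℚ (Nat.le_add_right p p), Nat.add_sub_cancel]
  have hf : ∀ a : ℕ, ((a ! : ℕ) : ℚ) ≠ 0 := fun a => by exact_mod_cast a.factorial_ne_zero
  rw [show 2*p = p+p by ring] at *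
  rw [h1]
  push_cast
  field_simp
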